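/- arXiv:0911.4860 — 2 statements merged into one kernel-verified Lean document; each statement's English description precedes it below -/
import Mathlib

section
/- With X, {e_k; f_k}, Q_n, Φ_r as above: ‖Φ_r(x)‖ < 2r for every x ∈ X. -/
open Filter Finset Topology

/-- The tail projection `Q_{n+1} = I - P_n` associated to a Schauder basis system,
where `P_n x = ∑_{k<n} f_k(x) e_k`.  Thus `tailProj f e n` is the paper's `Q_{n+1}`
and also its `R_n`. -/
noncomputable def tailProj {X : Type*} [NormedAddCommGroup X] [NormedSpace ℝ X]
    (f : ℕ → X →L[ℝ] ℝ) (e : ℕ → X) (n : ℕ) : X →L[ℝ] X :=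
  ContinuousLinearMap.id ℝ X - ∑ k ∈ Finset.range n, (f k).smulRight (e k)

/-- The piecewise-linear cutoff function `φ_r`: equal to `1` on `[-r, r]`,
`0` outside `(-2r, 2r)`, and `2 - |t|/r` in between. -/
noncomputable def phi (r t : ℝ) : ℝ :=
  if |t| ≤ r then 1 else if |t| ≤ 2 * r then 2 - |t| / r else 0

lemma phi_nonneg {r : ℝ} (hr : 0 < r) (t : ℝ) : 0 ≤ phi r t := by
  unfold phi
  split_ifs with h1 h2
  · norm_num
  · have : |t| / r ≤ 2 := by rw [div_le_iff₀ hr]; linarith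
    linarith
  · exact le_rfl

lemma phi_le_one {r : ℝ} (hr : 0 < r) (t : ℝ) : phi r t ≤ 1 := by
  unfold phi
  split_ifs with h1 h2
  · exact le_rfl
  · have : 1 ≤ |t| / r := by rw [le_div_iff₀ hr]; linarith [not_le.1 h1]
    linarith
  · norm_num

lemma phi_eq_zero {r t : ℝ} (hr : 0 < r) (h : 2 * r ≤ |t|) : phi r t = 0 := by
  unfold phi
  split_ifs with h1 h2
  · exfalso; linarith
  · have ht : |t| = 2 * r := le_antisymm h2 h
    rw [ht]; field_simp; norm_num
  · rfl

lemma phi_anti {r : ℝ} (hr : 0 < r) {s t : ℝ} (hs : 0 ≤ s) (hst : s ≤ t) :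
    phi r t ≤ phi r s := by
  have ht : 0 ≤ t := hs.trans hst
  unfold phi
  rw [abs_of_nonneg hs, abs_of_nonneg ht]
  have hdd : s / r ≤ t / r := by gcongr
  split_ifs with h1 h2 h3 h4 h5 <;> try linarith
  · -- t in middle, s ≤ r : 2 - t/r ≤ 1
    have : 1 ≤ t / r := by rw [le_div_iff₀ hr]; linarith
    linarith
  · -- t > 2r, s in middle : 0 ≤ 2 - s / r
    have : s / r ≤ 2 := by rw [div_le_iff₀ hr]; linarith
    linarith

/-- Abel-summation bound. -/
lemma abel_bound {X : Type*} [NormedAddCommGroup X] [NormedSpace ℝ X]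
    (Q : ℕ → X) (c : ℕ → ℝ) (B : ℝ)
    (hc0 : ∀ k, 0 ≤ c k) (hcm : ∀ k, c k ≤ c (k + 1))
    (hB : ∀ k, c k ≠ 0 → ‖Q k‖ ≤ B) :
    ∀ m, ‖(∑ k ∈ Finset.range (m + 1), c k • (Q k - Q (k + 1))) + c m • Q (m + 1)‖
      ≤ c m * B := by
  intro m
  induction m with
  | zero =>
    have : (∑ k ∈ Finset.range 1, c k • (Q k - Q (k + 1))) + c 0 • Q 1 = c 0 • Q 0 := by
      simp [smul_sub]
    rw [this, norm_smul, Real.norm_eq_abs, abs_of_nonneg (hc0 0)]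
    rcases eq_or_ne (c 0) 0 with h | h
    · simp [h]
    · exact mul_le_mul_of_nonneg_left (hB 0 h) (hc0 0)
  | succ m ih =>
    have heq : (∑ k ∈ Finset.range (m + 2), c k • (Q k - Q (k + 1))) + c (m + 1) • Q (m + 2)
        = ((∑ k ∈ Finset.range (m + 1), c k • (Q k - Q (k + 1))) + c m • Q (m + 1))
          + (c (m + 1) - c m) • Q (m + 1) := by
      rw [Finset.sum_range_succ]
      rw [smul_sub, sub_smul]
      abel
    rw [heq]
    have h2 : ‖(c (m + 1) - c m) • Q (m + 1)‖ ≤ (c (m + 1) - c m) * B := by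
      rcases eq_or_lt_of_le (hcm m) with h | h
      · simp [← h]
      · have hne : c (m + 1) ≠ 0 := by
          have := hc0 m; intro h0; rw [h0] at h; linarith
        rw [norm_smul, Real.norm_eq_abs, abs_of_nonneg (by linarith)]
        exact mul_le_mul_of_nonneg_left (hB (m + 1) hne) (by linarith)
    calc _ ≤ _ + ‖(c (m + 1) - c m) • Q (m + 1)‖ := norm_add_le _ _
      _ ≤ c m * B + (c (m + 1) - c m) * B := add_le_add ih h2
      _ = c (m + 1) * B := by ring

/-- `‖Φ_r(x)‖ < 2r` for every `x ∈ X`. -/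
theorem Phi_norm_lt_two_r
    {X : Type*} [NormedAddCommGroup X] [NormedSpace ℝ X] [CompleteSpace X]
    (e : ℕ → X) (f : ℕ → X →L[ℝ] ℝ)
    (hexp : ∀ x : X, Tendsto (fun n => ∑ k ∈ Finset.range n, f k x • e k) atTop (𝓝 x))
    (hbi : ∀ k j, f k (e j) = if k = j then (1 : ℝ) else 0)
    (hR : ∀ n, 1 ≤ n → ‖tailProj f e n‖ = 1)
    (r : ℝ) (hr : 0 < r) (Φ : X → X)
    (hΦ : ∀ x : X, Tendsto
      (fun n => ∑ k ∈ Finset.range n, phi r ‖tailProj f e k x‖ • (f k x • e k))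
      atTop (𝓝 (Φ x)))
    (x : X) :
    ‖Φ x‖ < 2 * r := by
  have hQapp : ∀ m (y : X), tailProj f e m y = y - ∑ k ∈ Finset.range m, f k y • e k := by
    intro m y
    simp [tailProj, ContinuousLinearMap.sum_apply]
  -- Q m kills e j for j < m
  have hQe : ∀ m j, j < m → tailProj f e m (e j) = 0 := by
    intro m j hj
    rw [hQapp]
    have : ∑ k ∈ Finset.range m, f k (e j) • e k = e j := by
      simp only [hbi, ite_smul, one_smul, zero_smul]
      rw [Finset.sum_ite_eq' (Finset.range m) j e]
      simp [Finset.mem_range.2 hj]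
    rw [this, sub_self]
  -- Q (k+1) (Q k x) = Q (k+1) x
  have hQQ : ∀ k, tailProj f e (k + 1) (tailProj f e k x) = tailProj f e (k + 1) x := by
    intro k
    rw [hQapp k x, map_sub, map_sum]
    have : ∑ i ∈ Finset.range k, tailProj f e (k + 1) (f i x • e i) = 0 := by
      apply Finset.sum_eq_zero
      intro i hi
      rw [map_smul, hQe (k + 1) i (Nat.lt_succ_of_lt (Finset.mem_range.1 hi)), smul_zero]
    rw [this, sub_zero]
  set t : ℕ → ℝ := fun k => ‖tailProj f e k x‖ with htdef
  have htnn : ∀ k, 0 ≤ t k := fun k => norm_nonneg _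
  have htmono : ∀ k, t (k + 1) ≤ t k := by
    intro k
    calc t (k + 1) = ‖tailProj f e (k + 1) (tailProj f e k x)‖ := by rw [hQQ]
      _ ≤ ‖tailProj f e (k + 1)‖ * ‖tailProj f e k x‖ :=
        (tailProj f e (k + 1)).le_opNorm _
      _ = t k := by rw [hR (k + 1) (Nat.succ_le_succ (Nat.zero_le k)), one_mul]
  have hta : ∀ {a b : ℕ}, a ≤ b → t b ≤ t a :=
    fun {a b} h => antitone_nat_of_succ_le htmono h
  -- t tends to 0
  have ht0 : Tendsto t atTop (𝓝 0) := by
    have h1 : Tendsto (fun m => tailProj f e m x) atTop (𝓝 0) := by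
      have h2 : Tendsto (fun m => x - ∑ k ∈ Finset.range m, f k x • e k) atTop (𝓝 (x - x)) :=
        Tendsto.sub tendsto_const_nhds (hexp x)
      rw [sub_self] at h2
      simpa [hQapp] using h2
    simpa using h1.norm
  set c : ℕ → ℝ := fun k => phi r (t k) with hcdef
  have hc0 : ∀ k, 0 ≤ c k := fun k => phi_nonneg hr _
  have hc1 : ∀ k, c k ≤ 1 := fun k => phi_le_one hr _
  have hcm : ∀ k, c k ≤ c (k + 1) := fun k => phi_anti hr (htnn (k + 1)) (htmono k)
  -- existence of n with t n < 2r
  have hex : ∃ m, t m < 2 * r := by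
    have : ∀ᶠ m in atTop, t m < 2 * r :=
      ht0.eventually (gt_mem_nhds (by linarith : (0 : ℝ) < 2 * r))
    exact this.exists
  set n := Nat.find hex with hndef
  have hn : t n < 2 * r := Nat.find_spec hex
  have hmin : ∀ k, c k ≠ 0 → t k ≤ t n := by
    intro k hk
    have hk2 : t k < 2 * r := by
      by_contra h
      exact hk (phi_eq_zero hr (by rw [abs_of_nonneg (htnn k)]; linarith))
    exact hta (Nat.find_le hk2)
  -- telescoping
  have htel : ∀ k, f k x • e k = tailProj f e k x - tailProj f e (k + 1) x := by
    intro k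
    rw [hQapp, hQapp, Finset.sum_range_succ]
    abel
  -- key bound via abel_bound
  have key := abel_bound (fun k => tailProj f e k x) c (t n) hc0 hcm hmin
  have hSbound : ∀ m, ‖∑ k ∈ Finset.range (m + 1), phi r ‖tailProj f e k x‖ • (f k x • e k)‖
      ≤ t n + t (m + 1) := by
    intro m
    have hEq : (∑ k ∈ Finset.range (m + 1), phi r ‖tailProj f e k x‖ • (f k x • e k))
        = ∑ k ∈ Finset.range (m + 1), c k • (tailProj f e k x - tailProj f e (k + 1) x) := by
      apply Finset.sum_congr rfl
      intro k _
      rw [htel k]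
    rw [hEq]
    have h1 := key m
    have h2 : ‖c m • tailProj f e (m + 1) x‖ ≤ t (m + 1) := by
      rw [norm_smul, Real.norm_eq_abs, abs_of_nonneg (hc0 m)]
      calc c m * ‖tailProj f e (m + 1) x‖ ≤ 1 * ‖tailProj f e (m + 1) x‖ :=
        mul_le_mul_of_nonneg_right (hc1 m) (norm_nonneg _)
        _ = t (m + 1) := one_mul _
    calc ‖∑ k ∈ Finset.range (m + 1), c k • (tailProj f e k x - tailProj f e (k + 1) x)‖
        ≤ ‖(∑ k ∈ Finset.range (m + 1), c k • (tailProj f e k x - tailProj f e (k + 1) x))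
            + c m • tailProj f e (m + 1) x‖ + ‖c m • tailProj f e (m + 1) x‖ := by
          have h3 := norm_sub_le ((∑ k ∈ Finset.range (m + 1),
            c k • (tailProj f e k x - tailProj f e (k + 1) x)) + c m • tailProj f e (m + 1) x)
            (c m • tailProj f e (m + 1) x)
          simpa using h3
        _ ≤ c m * t n + t (m + 1) := add_le_add h1 h2
        _ ≤ t n + t (m + 1) := by
          have : c m * t n ≤ 1 * t n :=
            mul_le_mul_of_nonneg_right (hc1 m) (htnn n)
          linarith
  -- take limits
  have hlim1 : Tendsto (fun m => ‖∑ k ∈ Finset.range (m + 1),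
      phi r ‖tailProj f e k x‖ • (f k x • e k)‖) atTop (𝓝 ‖Φ x‖) :=
    ((hΦ x).comp (tendsto_add_atTop_nat 1)).norm
  have hlim2 : Tendsto (fun m => t n + t (m + 1)) atTop (𝓝 (t n + 0)) :=
    tendsto_const_nhds.add (ht0.comp (tendsto_add_atTop_nat 1))
  have hfinal : ‖Φ x‖ ≤ t n + 0 :=
    le_of_tendsto_of_tendsto' hlim1 hlim2 hSbound
  rw [add_zero] at hfinal
  linarith
end

section
/- With X, {e_k; f_k}, Q_n, Φ_r as above: the map Φ_r : X → X is continuous. -/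
open Filter Finset Topology

lemma phi_eq {r : ℝ} (hr : 0 < r) (t : ℝ) :
    phi r t = min 1 (max 0 (2 - |t| / r)) := by
  unfold phi
  split_ifs with h1 h2
  · have : |t| / r ≤ 1 := (div_le_one hr).mpr h1
    rw [max_eq_right (by linarith), min_eq_left (by linarith)]
  · have h1' : 1 ≤ |t| / r := (le_div_iff₀ hr).mpr (by linarith)
    have h2' : |t| / r ≤ 2 := (div_le_iff₀ hr).mpr (by linarith)
    rw [max_eq_right (by linarith), min_eq_right (by linarith)]
  · have : 2 ≤ |t| / r := (le_div_iff₀ hr).mpr (by linarith)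
    rw [max_eq_left (by linarith), min_eq_right (by norm_num)]

lemma continuous_phi {r : ℝ} (hr : 0 < r) : Continuous (phi r) := by
  have h : phi r = fun t => min 1 (max 0 (2 - |t| / r)) := funext (phi_eq hr)
  rw [h]
  fun_prop

lemma phi_of_le {r : ℝ} {t : ℝ} (ht : 0 ≤ t) (h : t ≤ r) : phi r t = 1 := by
  simp [phi, abs_of_nonneg ht, h]

lemma tailProj_apply {X : Type*} [NormedAddCommGroup X] [NormedSpace ℝ X]
    (f : ℕ → X →L[ℝ] ℝ) (e : ℕ → X) (n : ℕ) (x : X) :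
    tailProj f e n x = x - ∑ k ∈ Finset.range n, f k x • e k := by
  simp [tailProj, ContinuousLinearMap.sum_apply]

lemma tailProj_e {X : Type*} [NormedAddCommGroup X] [NormedSpace ℝ X]
    {f : ℕ → X →L[ℝ] ℝ} {e : ℕ → X}
    (hbi : ∀ k j, f k (e j) = if k = j then (1 : ℝ) else 0)
    {j k : ℕ} (h : j < k) : tailProj f e k (e j) = 0 := by
  rw [tailProj_apply, sub_eq_zero]
  have : ∀ i ∈ Finset.range k, f i (e j) • e i = if i = j then e j else 0 := by
    intro i _
    rw [hbi]
    split_ifs with hij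
    · subst hij; simp
    · simp
  rw [Finset.sum_congr rfl this, Finset.sum_ite_eq' (Finset.range k) j (fun _ => e j)]
  simp [Finset.mem_range.mpr h]

lemma tailProj_comp {X : Type*} [NormedAddCommGroup X] [NormedSpace ℝ X]
    {f : ℕ → X →L[ℝ] ℝ} {e : ℕ → X}
    (hbi : ∀ k j, f k (e j) = if k = j then (1 : ℝ) else 0)
    {N k : ℕ} (h : N ≤ k) (y : X) :
    tailProj f e k (tailProj f e N y) = tailProj f e k y := by
  conv_lhs => rw [tailProj_apply f e N y]
  rw [map_sub, map_sum]
  have : ∀ j ∈ Finset.range N, tailProj f e k (f j y • e j) = 0 := by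
    intro j hj
    rw [map_smul, tailProj_e hbi (lt_of_lt_of_le (Finset.mem_range.mp hj) h), smul_zero]
  rw [Finset.sum_congr rfl this]
  simp

/-- The map `Φ_r : X → X` is continuous. -/
theorem Phi_continuous
    {X : Type*} [NormedAddCommGroup X] [NormedSpace ℝ X] [CompleteSpace X]
    (e : ℕ → X) (f : ℕ → X →L[ℝ] ℝ)
    (hexp : ∀ x : X, Tendsto (fun n => ∑ k ∈ Finset.range n, f k x • e k) atTop (𝓝 x))
    (hbi : ∀ k j, f k (e j) = if k = j then (1 : ℝ) else 0)
    (hR : ∀ n, 1 ≤ n → ‖tailProj f e n‖ = 1)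
    (r : ℝ) (hr : 0 < r) (Φ : X → X)
    (hΦ : ∀ x : X, Tendsto
      (fun n => ∑ k ∈ Finset.range n, phi r ‖tailProj f e k x‖ • (f k x • e k))
      atTop (𝓝 (Φ x))) :
    Continuous Φ := by
  rw [continuous_iff_continuousAt]
  intro x
  -- tail projections of x tend to 0
  have hQtend : Tendsto (fun n => tailProj f e n x) atTop (𝓝 0) := by
    have h1 : Tendsto (fun n => x - ∑ k ∈ Finset.range n, f k x • e k) atTop
        (𝓝 (x - x)) := tendsto_const_nhds.sub (hexp x)
    rw [sub_self] at h1
    simpa [tailProj_apply] using h1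
  -- choose N ≥ 1 with ‖Q_N x‖ < r/2
  have hev : ∀ᶠ n in atTop, ‖tailProj f e n x‖ < r / 2 := by
    have := (NormedAddCommGroup.tendsto_nhds_zero.mp hQtend) (r / 2) (by positivity)
    simpa using this
  obtain ⟨N, hN1, hNx⟩ := ((eventually_ge_atTop 1).and hev).exists
  -- the local model for Φ
  set g : X → X := fun y =>
    (∑ k ∈ Finset.range N, phi r ‖tailProj f e k y‖ • (f k y • e k)) + tailProj f e N y
    with hg
  -- key identity:  ‖Q_N y‖ ≤ r  →  Φ y = g y
  have hkey : ∀ y : X, ‖tailProj f e N y‖ ≤ r → Φ y = g y := by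
    intro y hy
    -- all later cutoffs equal 1
    have hcut : ∀ k, N ≤ k → phi r ‖tailProj f e k y‖ = 1 := by
      intro k hk
      apply phi_of_le (norm_nonneg _)
      calc ‖tailProj f e k y‖ = ‖tailProj f e k (tailProj f e N y)‖ := by
            rw [tailProj_comp hbi hk]
        _ ≤ ‖tailProj f e k‖ * ‖tailProj f e N y‖ :=
            (tailProj f e k).le_opNorm _
        _ = ‖tailProj f e N y‖ := by rw [hR k (le_trans hN1 hk), one_mul]
        _ ≤ r := hy
    -- partial sums of Φ at y, computed for n ≥ N
    have hsum : ∀ n, N ≤ n →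
        (∑ k ∈ Finset.range n, phi r ‖tailProj f e k y‖ • (f k y • e k)) =
        (∑ k ∈ Finset.range N, phi r ‖tailProj f e k y‖ • (f k y • e k)) +
          ((∑ k ∈ Finset.range n, f k y • e k) - ∑ k ∈ Finset.range N, f k y • e k) := by
      intro n hn
      rw [← Finset.sum_range_add_sum_Ico _ hn,
          ← Finset.sum_range_add_sum_Ico (fun k => f k y • e k) hn]
      have : ∀ k ∈ Finset.Ico N n, phi r ‖tailProj f e k y‖ • (f k y • e k) =
          f k y • e k := by
        intro k hk
        rw [hcut k (Finset.mem_Ico.mp hk).1, one_smul]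
      rw [Finset.sum_congr rfl this]
      abel
    have htend : Tendsto
        (fun n => ∑ k ∈ Finset.range n, phi r ‖tailProj f e k y‖ • (f k y • e k))
        atTop (𝓝 (g y)) := by
      have h2 : Tendsto (fun n =>
          (∑ k ∈ Finset.range N, phi r ‖tailProj f e k y‖ • (f k y • e k)) +
          ((∑ k ∈ Finset.range n, f k y • e k) - ∑ k ∈ Finset.range N, f k y • e k))
          atTop (𝓝 ((∑ k ∈ Finset.range N, phi r ‖tailProj f e k y‖ • (f k y • e k)) +
            (y - ∑ k ∈ Finset.range N, f k y • e k))) :=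
        tendsto_const_nhds.add ((hexp y).sub tendsto_const_nhds)
      have heq : (fun n =>
          (∑ k ∈ Finset.range N, phi r ‖tailProj f e k y‖ • (f k y • e k)) +
          ((∑ k ∈ Finset.range n, f k y • e k) - ∑ k ∈ Finset.range N, f k y • e k))
          =ᶠ[atTop] (fun n =>
            ∑ k ∈ Finset.range n, phi r ‖tailProj f e k y‖ • (f k y • e k)) := by
        filter_upwards [eventually_ge_atTop N] with n hn
        rw [hsum n hn]
      have hgy : g y = (∑ k ∈ Finset.range N, phi r ‖tailProj f e k y‖ • (f k y • e k)) +
          (y - ∑ k ∈ Finset.range N, f k y • e k) := by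
        simp only [hg]; rw [tailProj_apply]
      rw [hgy]
      exact h2.congr' heq
    exact tendsto_nhds_unique (hΦ y) htend
  -- g is continuous
  have hgc : Continuous g := by
    apply Continuous.add
    · apply continuous_finset_sum
      intro k _
      exact ((continuous_phi hr).comp ((tailProj f e k).continuous.norm)).smul
        ((f k).continuous.smul continuous_const)
    · exact (tailProj f e N).continuous
  -- Φ = g near x
  have hloc : Φ =ᶠ[𝓝 x] g := by
    have hball : Metric.ball x (r / 2) ∈ 𝓝 x :=
      Metric.ball_mem_nhds x (by positivity)
    filter_upwards [hball] with y hy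
    apply hkey
    have : tailProj f e N y = tailProj f e N x + tailProj f e N (y - x) := by
      rw [← map_add]; congr 1; abel
    rw [this]
    have h3 : ‖tailProj f e N (y - x)‖ ≤ ‖y - x‖ := by
      calc ‖tailProj f e N (y - x)‖ ≤ ‖tailProj f e N‖ * ‖y - x‖ :=
            (tailProj f e N).le_opNorm _
        _ = ‖y - x‖ := by rw [hR N hN1, one_mul]
    have h4 : ‖y - x‖ < r / 2 := by
      rw [← dist_eq_norm]; exact Metric.mem_ball.mp hy
    calc ‖tailProj f e N x + tailProj f e N (y - x)‖
        ≤ ‖tailProj f e N x‖ + ‖tailProj f e N (y - x)‖ := norm_add_le _ _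
      _ ≤ r / 2 + r / 2 := by linarith
      _ = r := by ring
  exact (hgc.continuousAt).congr hloc.symm
end
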